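/- Let Γ be a hyperbolic (no-square) 2-colored right-angled Coxeter group with S = A ⊔ B, and U, V canonical a-representations with UV reduced, notation as before. Then at most one letter u ∈ U_R is moved by the canonical reduction map of UV to the right of a_{p+2}. -/

import Mathlib

/-- A word is a *left a-representation* with respect to the 2-coloring
`c : B → Bool` if every letter of color `a` (`c = true`) immediately preceded
by a letter of color `b` (`c = false`) does not commute with it. -/
def IsLeftARep {B : Type*} (M : CoxeterMatrix B) (c : B → Bool) (w : List B) : Prop :=
  ∀ (l : List B) (x y : B) (r : List B),
    w = l ++ x :: y :: r → c y = true → c x = false → M x y = 0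

/-- Siebenmann's no-square condition. -/
def HasNoSquare {B : Type*} (M : CoxeterMatrix B) : Prop :=
  ¬ ∃ s₁ s₂ t₁ t₂ : B,
      M s₁ t₁ = 2 ∧ M s₁ t₂ = 2 ∧ M s₂ t₁ = 2 ∧ M s₂ t₂ = 2 ∧
      s₁ ≠ s₂ ∧ M s₁ s₂ = 0 ∧ t₁ ≠ t₂ ∧ M t₁ t₂ = 0

namespace RacgAux

variable {B : Type*} {W : Type*} [Group W] {M : CoxeterMatrix B} (cs : CoxeterSystem M W)

lemma simple_comm_of_two {x t : B} (h : M x t = 2) :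
    cs.simple x * cs.simple t = cs.simple t * cs.simple x := by
  have h2 := cs.simple_mul_simple_pow x t
  rw [h] at h2
  have h3 : (cs.simple x * cs.simple t) * (cs.simple x * cs.simple t) = 1 := by
    rw [← pow_two]; exact h2
  have h4 : cs.simple x * cs.simple t = (cs.simple x * cs.simple t)⁻¹ :=
    eq_inv_of_mul_eq_one_left h3
  rw [h4, mul_inv_rev, cs.inv_simple, cs.inv_simple]

lemma simple_comm_wordProd {x : B} {m : List B}
    (h : ∀ t ∈ m, cs.simple x * cs.simple t = cs.simple t * cs.simple x) :
    cs.simple x * cs.wordProd m = cs.wordProd m * cs.simple x := by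
  induction m with
  | nil => simp
  | cons a l ih =>
    rw [cs.wordProd_cons, ← mul_assoc, h a List.mem_cons_self, mul_assoc,
      ih (fun t ht => h t (List.mem_cons_of_mem _ ht)), mul_assoc]

lemma exists_sep (hra : ∀ s t : B, s ≠ t → M s t = 0 ∨ M s t = 2)
    {w : List B} (hw : cs.IsReduced w) (p q : Fin w.length)
    (hpq : (p : ℕ) < (q : ℕ)) (heq : w.get p = w.get q) :
    ∃ k : Fin w.length, (p : ℕ) < (k : ℕ) ∧ (k : ℕ) < (q : ℕ) ∧
      (w.get k = w.get p ∨ M (w.get k) (w.get p) = 0) := by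
  by_contra hcon
  push_neg at hcon
  have hq : (q : ℕ) < w.length := q.isLt
  have hp : (p : ℕ) < w.length := p.isLt
  set x := w.get p with hx
  set l := w.take p.val with hl
  set m := (w.drop (p.val + 1)).take (q.val - (p.val + 1)) with hm
  set r := w.drop (q.val + 1) with hr
  have hdecomp : w = l ++ x :: (m ++ x :: r) := by
    have h1 : w = w.take p.val ++ w.drop p.val := (List.take_append_drop _ _).symm
    have h2 : w.drop p.val = w[p.val] :: w.drop (p.val + 1) := List.drop_eq_getElem_cons hp
    have h3 : w.drop (p.val + 1) = m ++ (w.drop (p.val + 1)).drop (q.val - (p.val + 1)) :=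
      (List.take_append_drop _ _).symm
    have h4 : (w.drop (p.val + 1)).drop (q.val - (p.val + 1)) = w.drop q.val := by
      rw [List.drop_drop]
      congr 1
      omega
    have h5 : w.drop q.val = w[q.val] :: r := List.drop_eq_getElem_cons hq
    have hxq : w[q.val] = x := by
      rw [hx, List.get_eq_getElem] at heq ⊢
      exact heq.symm ▸ rfl
    have hxp : w[p.val] = x := by rw [hx, List.get_eq_getElem]
    rw [h1, h2, h3, h4, h5, hxq, hxp]
  have hcomm : ∀ t ∈ m, cs.simple x * cs.simple t = cs.simple t * cs.simple x := by
    intro t ht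
    obtain ⟨n, hn, hget⟩ := List.mem_iff_getElem.mp ht
    have hnlt : n < q.val - (p.val + 1) := by
      have := hn
      rw [hm, List.length_take] at this
      omega
    have hidx : p.val + 1 + n < w.length := by omega
    have hget2 : ((w.drop (p.val + 1)).take (q.val - (p.val + 1)))[n]'(hm ▸ hn) = t := hget
    have hval : w[p.val + 1 + n]'hidx = t := by
      simpa using hget2
    have hk := hcon ⟨p.val + 1 + n, hidx⟩ (by simp; omega) (by simp; omega)
    rw [List.get_eq_getElem] at hk
    simp only [hval] at hk
    rcases hra t x hk.1 with h0 | h2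
    · exact absurd h0 hk.2
    · exact simple_comm_of_two cs ((M.symmetric t x).symm.trans h2)
  have hprod : cs.wordProd w = cs.wordProd (l ++ (m ++ r)) := by
    conv_lhs => rw [hdecomp]
    rw [cs.wordProd_append, cs.wordProd_cons, cs.wordProd_append, cs.wordProd_cons,
      cs.wordProd_append]
    congr 1
    rw [← mul_assoc, simple_comm_wordProd cs hcomm, mul_assoc, ← mul_assoc (cs.simple x),
      cs.simple_mul_simple_self, one_mul]
    exact (cs.wordProd_append m r).symm
  have hlen : cs.length (cs.wordProd w) ≤ (l ++ (m ++ r)).length := by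
    rw [hprod]; exact cs.length_wordProd_le _
  have hlw : w.length = (l ++ (m ++ r)).length + 2 := by
    have := congrArg List.length hdecomp
    simp only [List.length_append, List.length_cons] at this ⊢
    omega
  rw [hw] at hlen
  omega

end RacgAux

/-- Let `Γ` be a hyperbolic (no-square) 2-colored
right-angled Coxeter group, `U, V` canonical a-representations with `U ++ V`
reduced, and let `Wc` be the canonical a-representation of the product, with
`φ` the canonical reduction map (a bijection of letter positions matching the
letters and preserving the relative order of any two equal or non-commuting
letters). Let `j₁ < j₂` be the positions of the first two `a`-letters
`a_{p+1}, a_{p+2}` of `V`. Then at most one letter of `U` is moved by `φ` to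
the right of `a_{p+2}`. -/
theorem racg_at_most_one_letter_beyond_second
    {B : Type*} {W : Type*} [Group W] {M : CoxeterMatrix B}
    (cs : CoxeterSystem M W)
    (hra : ∀ s t : B, s ≠ t → M s t = 0 ∨ M s t = 2)
    (hhyp : HasNoSquare M)
    (c : B → Bool)
    (hcolor : ∀ s t : B, s ≠ t → c s = c t → M s t = 0)
    (U V Wc : List B)
    (hU : cs.IsReduced U ∧ IsLeftARep M c U)
    (hV : cs.IsReduced V ∧ IsLeftARep M c V)
    (hUV : cs.IsReduced (U ++ V))
    (hWc : cs.IsReduced Wc ∧ IsLeftARep M c Wc)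
    (hprod : cs.wordProd Wc = cs.wordProd (U ++ V))
    (φ : Fin (U ++ V).length ≃ Fin Wc.length)
    (hletters : ∀ i : Fin (U ++ V).length, (U ++ V).get i = Wc.get (φ i))
    (horder : ∀ i j : Fin (U ++ V).length, (i : ℕ) < (j : ℕ) →
      ((U ++ V).get i = (U ++ V).get j ∨ M ((U ++ V).get i) ((U ++ V).get j) = 0) →
      (φ i : ℕ) < (φ j : ℕ))
    (j₁ j₂ : Fin (U ++ V).length)
    (hj₁U : U.length ≤ (j₁ : ℕ)) (hj₁j₂ : (j₁ : ℕ) < (j₂ : ℕ))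
    (hj₁a : c ((U ++ V).get j₁) = true) (hj₂a : c ((U ++ V).get j₂) = true)
    (hj₁first : ∀ i : Fin (U ++ V).length,
      U.length ≤ (i : ℕ) → (i : ℕ) < (j₁ : ℕ) → c ((U ++ V).get i) = false)
    (hj₂second : ∀ i : Fin (U ++ V).length,
      (j₁ : ℕ) < (i : ℕ) → (i : ℕ) < (j₂ : ℕ) → c ((U ++ V).get i) = false) :
    ∀ i i' : Fin (U ++ V).length, (i : ℕ) < U.length → (i' : ℕ) < U.length →
      (φ j₂ : ℕ) < (φ i : ℕ) → (φ j₂ : ℕ) < (φ i' : ℕ) → i = i' := by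
  intro i i' hiU hi'U hφi hφi'
  have hφ12 : (φ j₁ : ℕ) < (φ j₂ : ℕ) := by
    apply horder j₁ j₂ hj₁j₂
    by_cases h : (U ++ V).get j₁ = (U ++ V).get j₂
    · exact Or.inl h
    · exact Or.inr (hcolor _ _ h (by rw [hj₁a, hj₂a]))
  have hN : ∀ p : Fin (U ++ V).length, (p : ℕ) < U.length → (φ j₂ : ℕ) < (φ p : ℕ) →
      ((U ++ V).get p ≠ (U ++ V).get j₁ ∧ M ((U ++ V).get p) ((U ++ V).get j₁) = 2) ∧
      ((U ++ V).get p ≠ (U ++ V).get j₂ ∧ M ((U ++ V).get p) ((U ++ V).get j₂) = 2) := by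
    intro p hpU hφp
    have hp1 : (p : ℕ) < (j₁ : ℕ) := lt_of_lt_of_le hpU hj₁U
    have hp2 : (p : ℕ) < (j₂ : ℕ) := lt_trans hp1 hj₁j₂
    constructor
    · have h1 : ¬ ((U ++ V).get p = (U ++ V).get j₁ ∨
          M ((U ++ V).get p) ((U ++ V).get j₁) = 0) := by
        intro h
        have := horder p j₁ hp1 h
        omega
      push_neg at h1
      refine ⟨h1.1, ?_⟩
      rcases hra _ _ h1.1 with h | h
      · exact absurd h h1.2
      · exact h
    · have h1 : ¬ ((U ++ V).get p = (U ++ V).get j₂ ∨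
          M ((U ++ V).get p) ((U ++ V).get j₂) = 0) := by
        intro h
        have := horder p j₂ hp2 h
        omega
      push_neg at h1
      refine ⟨h1.1, ?_⟩
      rcases hra _ _ h1.1 with h | h
      · exact absurd h h1.2
      · exact h
  have hcp : ∀ p : Fin (U ++ V).length, (p : ℕ) < U.length → (φ j₂ : ℕ) < (φ p : ℕ) →
      c ((U ++ V).get p) = false := by
    intro p hpU hφp
    cases hc : c ((U ++ V).get p) with
    | false => rfl
    | true =>
      have h2 := (hN p hpU hφp).1
      have h0 := hcolor _ _ h2.1 (by rw [hc, hj₁a])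
      have h22 := h2.2
      omega
  by_cases h12 : (U ++ V).get j₁ = (U ++ V).get j₂
  · exfalso
    obtain ⟨k, hk1, hk2, hk3⟩ := RacgAux.exists_sep cs hra hUV j₁ j₂ hj₁j₂ h12
    have hck : c ((U ++ V).get k) = false := hj₂second k hk1 hk2
    have hM0 : M ((U ++ V).get k) ((U ++ V).get j₁) = 0 := by
      rcases hk3 with h | h
      · rw [h, hj₁a] at hck; exact absurd hck (by simp)
      · exact h
    have hNi := hN i hiU hφi
    have hciT := hcp i hiU hφi
    have hik : (U ++ V).get i ≠ (U ++ V).get k := by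
      intro h
      have h2 := hNi.1.2
      rw [h] at h2
      omega
    have hMik : M ((U ++ V).get i) ((U ++ V).get k) = 0 :=
      hcolor _ _ hik (by rw [hciT, hck])
    have h1 : (φ i : ℕ) < (φ k : ℕ) := horder i k (by omega) (Or.inr hMik)
    have h2 : (φ k : ℕ) < (φ j₂ : ℕ) := horder k j₂ hk2 (Or.inr (by rw [← h12]; exact hM0))
    omega
  · have hMa : M ((U ++ V).get j₁) ((U ++ V).get j₂) = 0 :=
      hcolor _ _ h12 (by rw [hj₁a, hj₂a])
    have claim : ∀ d : ℕ, ∀ p q : Fin (U ++ V).length, (q : ℕ) - (p : ℕ) ≤ d →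
        (p : ℕ) < (q : ℕ) → (q : ℕ) < U.length →
        (φ j₂ : ℕ) < (φ p : ℕ) → (φ j₂ : ℕ) < (φ q : ℕ) →
        (U ++ V).get p = (U ++ V).get q → False := by
      intro d
      induction d with
      | zero => intro p q h1 h2 _ _ _ _; omega
      | succ n ih =>
        intro p q hle hlt hqU hφp hφq hequ
        have hpU : (p : ℕ) < U.length := lt_trans hlt hqU
        obtain ⟨k, hk1, hk2, hk3⟩ := RacgAux.exists_sep cs hra hUV p q hlt hequ
        rcases hk3 with hk | hk
        · have hφk : (φ p : ℕ) < (φ k : ℕ) := horder p k hk1 (Or.inl hk.symm)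
          exact ih k q (by omega) hk2 hqU (by omega) hφq (hk.trans hequ)
        · have hkp : (U ++ V).get k ≠ (U ++ V).get p := by
            intro h
            rw [h] at hk
            have := M.diagonal ((U ++ V).get p)
            omega
          have hφk : (φ p : ℕ) < (φ k : ℕ) :=
            horder p k hk1 (Or.inr ((M.symmetric _ _).trans hk))
          have hkU : (k : ℕ) < U.length := lt_trans hk2 hqU
          have hφk2 : (φ j₂ : ℕ) < (φ k : ℕ) := by omega
          have hNk := hN k hkU hφk2
          have hNp := hN p hpU hφp
          exact hhyp ⟨(U ++ V).get p, (U ++ V).get k, (U ++ V).get j₁, (U ++ V).get j₂,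
            hNp.1.2, hNp.2.2, hNk.1.2, hNk.2.2, Ne.symm hkp,
            (M.symmetric _ _).trans hk, h12, hMa⟩
    by_cases hequ : (U ++ V).get i = (U ++ V).get i'
    · rcases Nat.lt_trichotomy (i : ℕ) (i' : ℕ) with h | h | h
      · exact (claim (U ++ V).length i i' (by omega) h hi'U hφi hφi' hequ).elim
      · exact Fin.ext h
      · exact (claim (U ++ V).length i' i (by omega) h hiU hφi' hφi hequ.symm).elim
    · exfalso
      have hMuu : M ((U ++ V).get i) ((U ++ V).get i') = 0 :=
        hcolor _ _ hequ (by rw [hcp i hiU hφi, hcp i' hi'U hφi'])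
      exact hhyp ⟨(U ++ V).get i, (U ++ V).get i', (U ++ V).get j₁, (U ++ V).get j₂,
        (hN i hiU hφi).1.2, (hN i hiU hφi).2.2, (hN i' hi'U hφi').1.2, (hN i' hi'U hφi').2.2,
        hequ, hMuu, h12, hMa⟩
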